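/- Fix ε > 0, α > 0, and integer K ≥ 2. Suppose there exist Bernoulli mechanisms M₁,...,M_K with success probabilities pᵢ(D₀) = 1/(2K^{0.5}) and pᵢ(D_j) = 1 - 1/(2K^α) if i = j, else 1/(2K^{1+α}), where D₀ is at Hamming distance Δ = ⌈(0.5+α)ln K / ε⌉ from each D_j, and each Mᵢ is ε-DP along these paths. If a selection algorithm M is ε̂-DP and outputs index j on dataset D_j with probability at least K^{-α} for each j ∈ [K], then ε̂ ≥ (1-α)ln K / ⌈(0.5+α)ln K / ε⌉; in particular for K large enough, ε̂ ≥ 2(1-3α)ε. -/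

import Mathlib

set_option maxHeartbeats 1000000 in
/-- Packing lower bound.  Fix `ε > 0`, `α > 0`, `K ≥ 2`, and let
`Δ = ⌈(0.5+α)·ln K / ε⌉`.  Suppose (as realized by the Bernoulli mechanisms with
`pᵢ(D₀) = 1/(2K^{0.5})`, `pᵢ(D_j) = 1 - 1/(2K^α)` for `i = j` and `1/(2K^{1+α})`
otherwise, which are `ε`-DP at Hamming distance `Δ`) that an `ε̂`-DP selection
algorithm has output probabilities `P₀ j = Pr[M(D₀) = j]` and `Pj j = Pr[M(D_j) = j]`
satisfying `∑_j P₀ j ≤ 1`, the group-privacy bound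
`e^{-Δε̂}·Pj j ≤ P₀ j` for all `j`, and the weak-usefulness bound `Pj j ≥ K^{-α}`.
Then `ε̂ ≥ (1-α)·ln K / Δ`; and in particular, for all large enough `K`,
`(1-α)·ln K / ⌈(0.5+α)·ln K / ε⌉ ≥ 2(1-3α)ε`, hence `ε̂ ≥ 2(1-3α)ε`. -/
theorem stmt17 (ε α : ℝ) (hε : 0 < ε) (hα : 0 < α) (K : ℕ) (hK : 2 ≤ K)
    (εhat : ℝ)
    (Δ : ℕ) (hΔ : Δ = ⌈(0.5 + α) * Real.log K / ε⌉₊)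
    (P₀ Pj : Fin K → ℝ)
    (hP₀nn : ∀ j, 0 ≤ P₀ j) (hsum : ∑ j, P₀ j ≤ 1)
    (hpath : ∀ j, Real.exp (-((Δ : ℝ) * εhat)) * Pj j ≤ P₀ j)
    (hutil : ∀ j, (K : ℝ) ^ (-α) ≤ Pj j) :
    (1 - α) * Real.log K / (Δ : ℝ) ≤ εhat ∧
    ∃ K₀ : ℕ, ∀ K' : ℕ, K₀ ≤ K' →
      2 * (1 - 3 * α) * ε ≤
        (1 - α) * Real.log K' / ((⌈(0.5 + α) * Real.log K' / ε⌉₊ : ℕ) : ℝ) := by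
  have hK0 : (0:ℝ) < K := by positivity
  have hK1 : (1:ℝ) < K := by exact_mod_cast lt_of_lt_of_le one_lt_two (by exact_mod_cast hK)
  have hlogK : 0 < Real.log K := Real.log_pos hK1
  have hΔpos : 0 < Δ := by
    rw [hΔ]; rw [Nat.ceil_pos]; positivity
  have hΔR : (0:ℝ) < (Δ:ℝ) := by exact_mod_cast hΔpos
  constructor
  · -- Part 1
    have hne : (Finset.univ : Finset (Fin K)).Nonempty :=
      ⟨⟨0, by omega⟩, Finset.mem_univ _⟩
    obtain ⟨j, hj⟩ : ∃ j : Fin K, P₀ j ≤ 1 / K := by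
      by_contra h
      push_neg at h
      have h1 : (1:ℝ) < ∑ j, P₀ j := by
        have := Finset.sum_lt_sum_of_nonempty hne (fun j _ => h j)
        have hconst : ∑ _j : Fin K, (1:ℝ)/K = 1 := by
          rw [Finset.sum_const, Finset.card_univ, Fintype.card_fin]
          rw [nsmul_eq_mul, mul_one_div_cancel hK0.ne']
        linarith [hconst ▸ this]
      linarith
    have hrp : (K:ℝ) ^ (-α) = Real.exp (-α * Real.log K) := by
      rw [Real.rpow_def_of_pos hK0]; ring_nf
    have hchain : Real.exp (-((Δ:ℝ)*εhat)) * (K:ℝ)^(-α) ≤ 1/K := by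
      calc Real.exp (-((Δ:ℝ)*εhat)) * (K:ℝ)^(-α)
          ≤ Real.exp (-((Δ:ℝ)*εhat)) * Pj j :=
            mul_le_mul_of_nonneg_left (hutil j) (Real.exp_nonneg _)
        _ ≤ P₀ j := hpath j
        _ ≤ 1/K := hj
    have h1k : (1:ℝ)/K = Real.exp (-Real.log K) := by
      rw [Real.exp_neg, Real.exp_log hK0, one_div]
    rw [hrp, ← Real.exp_add, h1k] at hchain
    have hineq := Real.exp_le_exp.mp hchain
    rw [div_le_iff₀ hΔR]
    nlinarith
  · -- Part 2
    refine ⟨max 2 (⌈Real.exp (ε/(3*α^2))⌉₊ + 1), fun K' hK' => ?_⟩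
    have hK'2 : 2 ≤ K' := le_trans (le_max_left _ _) hK'
    have hK'0 : (0:ℝ) < K' := by positivity
    have hK'1 : (1:ℝ) < K' := by exact_mod_cast lt_of_lt_of_le one_lt_two (by exact_mod_cast hK'2)
    set L := Real.log K' with hLdef
    have hL : 0 < L := Real.log_pos hK'1
    have hLc : ε/(3*α^2) ≤ L := by
      rw [hLdef, Real.le_log_iff_exp_le hK'0]
      calc Real.exp (ε/(3*α^2)) ≤ (⌈Real.exp (ε/(3*α^2))⌉₊ : ℝ) := Nat.le_ceil _
        _ ≤ (K':ℝ) := by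
          have : ⌈Real.exp (ε/(3*α^2))⌉₊ ≤ K' := by
            have := le_trans (le_max_right 2 (⌈Real.exp (ε/(3*α^2))⌉₊ + 1)) hK'
            omega
          exact_mod_cast this
    set D := (⌈(0.5 + α) * L / ε⌉₊ : ℕ) with hDdef
    have hDpos : 0 < D := by rw [hDdef, Nat.ceil_pos]; positivity
    have hDR : (0:ℝ) < (D:ℝ) := by exact_mod_cast hDpos
    have hD1 : (0.5 + α) * L / ε ≤ (D:ℝ) := Nat.le_ceil _
    have hD2 : (D:ℝ) ≤ (0.5 + α) * L / ε + 1 := by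
      have := Nat.ceil_lt_add_one (show (0:ℝ) ≤ (0.5 + α) * L / ε by positivity)
      exact le_of_lt this
    have hD1' : (0.5 + α) * L ≤ ε * (D:ℝ) := by
      rw [div_le_iff₀ hε] at hD1; linarith
    have hD2' : ε * (D:ℝ) ≤ (0.5 + α) * L + ε := by
      have : ((0.5 + α) * L / ε + 1) * ε = (0.5 + α) * L + ε := by field_simp
      nlinarith
    have hL' : ε ≤ 3 * α^2 * L := by
      rw [div_le_iff₀ (by positivity : (0:ℝ) < 3*α^2)] at hLc; linarith
    rw [le_div_iff₀ hDR]
    have h6 : (0:ℝ) ≤ 6*α^2*L := by positivity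
    rcases le_or_gt (1 - 3*α) 0 with hc | hc
    · have h2 : 2*(1-3*α) * (ε*(D:ℝ)) ≤ 2*(1-3*α) * ((0.5+α)*L) :=
        mul_le_mul_of_nonpos_left hD1' (by linarith)
      nlinarith [h2, h6]
    · have h2 : 2*(1-3*α) * (ε*(D:ℝ)) ≤ 2*(1-3*α) * ((0.5+α)*L + ε) :=
        mul_le_mul_of_nonneg_left hD2' (by linarith)
      nlinarith [h2, hL', mul_pos hα hε]
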